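/- Let h, a, k be positive integers and d an integer with gcd(a,d) = 1 and a + kd > 0. Then ⟨a⟩ + ⟨ha+d⟩ + ⟨ha+2d⟩ + ... + ⟨ha+kd⟩ = ⟨a⟩ ⊕ { ha·⌈r/k⌉ + dr : 0 ≤ r < a }, where the sum on the right is direct. In particular, the Apéry set of ⟨a, ha+d, ..., ha+kd⟩ with respect to a is { ha·⌈r/k⌉ + dr : 0 ≤ r < a }. -/

import Mathlib

private lemma aux_ceil_le {k u t : ℕ} (hk : 0 < k) (h : u ≤ k * t) :
    (u + k - 1) / k ≤ t := by
  rw [Nat.div_le_iff_le_mul_add_pred hk]; omega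

private lemma aux_add_div (k x y : ℕ) (hk : 0 < k) : x / k + y / k ≤ (x + y) / k := by
  rw [Nat.le_div_iff_mul_le hk, Nat.add_mul]
  exact Nat.add_le_add (Nat.div_mul_le_self _ _) (Nat.div_mul_le_self _ _)

private lemma aux_ceil_eq (k q s : ℕ) (h1 : 1 ≤ s) (h2 : s ≤ k) :
    (q * k + s + k - 1) / k = q + 1 := by
  have hk : 0 < k := lt_of_lt_of_le h1 h2
  have e : q * k + s + k - 1 = s + k - 1 + q * k := by omega
  have e2 : (s + k - 1) / k = 1 := Nat.div_eq_of_lt_le (by omega) (by omega)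
  rw [e, Nat.add_mul_div_right _ _ hk, e2, Nat.add_comm]

/-- forward direction: membership in the generated monoid gives the normal form. -/
private lemma aux_fwd (h a k : ℕ) (hh : 0 < h) (ha : 0 < a) (hk : 0 < k) (d : ℤ)
    (hpos : 0 < (a : ℤ) + k * d) (x : ℕ → ℕ) :
    ∃ m r : ℕ, r < a ∧
      (a : ℤ) * x 0 + ∑ i ∈ Finset.Icc 1 k, ((h * a : ℤ) + i * d) * x i =
        a * m + ((h * a : ℤ) * (((r + k - 1) / k : ℕ) : ℤ) + d * r) := by
  set t : ℕ := ∑ i ∈ Finset.Icc 1 k, x i with ht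
  set u : ℕ := ∑ i ∈ Finset.Icc 1 k, i * x i with hu
  have hsum : ∑ i ∈ Finset.Icc 1 k, ((h * a : ℤ) + i * d) * x i
      = (h * a : ℤ) * t + d * u := by
    rw [ht, hu, Nat.cast_sum, Nat.cast_sum, Finset.mul_sum, Finset.mul_sum,
      ← Finset.sum_add_distrib]
    refine Finset.sum_congr rfl fun i _ => ?_
    push_cast; ring
  have hut : u ≤ k * t := by
    rw [ht, hu, Finset.mul_sum]
    refine Finset.sum_le_sum fun i hi => ?_
    exact Nat.mul_le_mul_right _ (Finset.mem_Icc.mp hi).2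
  set q : ℕ := u / a with hq
  set r : ℕ := u % a with hr
  have hra : r < a := Nat.mod_lt _ ha
  have huar : u = a * q + r := (Nat.div_add_mod u a).symm
  set c : ℕ := (r + k - 1) / k with hc
  set f : ℕ := (a * q) / k with hf
  have hcf : c + f ≤ t := by
    have h1 : (u + k - 1) / k ≤ t := aux_ceil_le hk hut
    have h2 : c + f ≤ (r + k - 1 + a * q) / k := aux_add_div k _ _ hk
    have h3 : r + k - 1 + a * q = u + k - 1 := by omega
    rw [h3] at h2
    omega
  -- key nonnegativity
  have hkf : (a : ℤ) * q - k < k * f := by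
    have h1 := Nat.div_add_mod (a * q) k
    have h2 : a * q % k < k := Nat.mod_lt _ hk
    have h1' : (k : ℤ) * f + (a * q % k : ℕ) = (a : ℤ) * q := by exact_mod_cast h1
    have h2' : ((a * q % k : ℕ) : ℤ) < k := by exact_mod_cast h2
    linarith
  have hM0 : (0 : ℤ) ≤ (h : ℤ) * f + d * q := by
    rcases Nat.eq_zero_or_pos q with hq0 | hq0
    · simp [hq0]; positivity
    · have hq1 : (1 : ℤ) ≤ q := by exact_mod_cast hq0
      have hkd : (1 : ℤ) - a ≤ k * d := by linarith
      have hh1 : (1 : ℤ) ≤ h := by exact_mod_cast hh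
      have hk1 : (1 : ℤ) ≤ k := by exact_mod_cast hk
      have hf0 : (0 : ℤ) ≤ f := by positivity
      have key : (k : ℤ) * ((h : ℤ) * f + d * q) ≥ 2 - k := by
        have e1 : (h : ℤ) * (k * f) ≥ k * f := le_mul_of_one_le_left (by positivity) hh1
        have e2 : (k * d) * q ≥ (1 - a) * q :=
          mul_le_mul_of_nonneg_right hkd (by linarith)
        nlinarith
      nlinarith
  set M : ℤ := (x 0 : ℤ) + h * ((t : ℤ) - c) + d * q with hM
  have hMnn : 0 ≤ M := by
    have h3 : (f : ℤ) ≤ (t : ℤ) - c := by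
      have : (c : ℤ) + f ≤ t := by exact_mod_cast hcf
      linarith
    have h4 : (h : ℤ) * f ≤ (h : ℤ) * ((t : ℤ) - c) :=
      mul_le_mul_of_nonneg_left h3 (by positivity)
    have hx0 : (0 : ℤ) ≤ (x 0 : ℤ) := by positivity
    rw [hM]; linarith
  refine ⟨M.toNat, r, hra, ?_⟩
  have hMt : (M.toNat : ℤ) = M := Int.toNat_of_nonneg hMnn
  have huZ : (u : ℤ) = (a : ℤ) * q + r := by exact_mod_cast huar
  rw [hsum, hMt, hM, ← hc]
  rw [huZ]; ring

/-- backward direction -/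
private lemma aux_bwd (h a k : ℕ) (hh : 0 < h) (ha : 0 < a) (hk : 0 < k) (d : ℤ)
    (m r : ℕ) (hr : r < a) :
    ∃ x : ℕ → ℕ,
      (a : ℤ) * m + ((h * a : ℤ) * (((r + k - 1) / k : ℕ) : ℤ) + d * r) =
        a * x 0 + ∑ i ∈ Finset.Icc 1 k, ((h * a : ℤ) + i * d) * x i := by
  rcases Nat.eq_zero_or_pos r with hr0 | hr0
  · refine ⟨fun i => if i = 0 then m else 0, ?_⟩
    have hc0 : (r + k - 1) / k = 0 := by
      rw [hr0]; exact Nat.div_eq_of_lt (by omega)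
    have hzero : ∑ i ∈ Finset.Icc 1 k, ((h * a : ℤ) + i * d) *
        (((fun i => if i = 0 then m else 0) i : ℕ) : ℤ) = 0 := by
      refine Finset.sum_eq_zero fun i hi => ?_
      have hi0 : i ≠ 0 := by have := (Finset.mem_Icc.mp hi).1; omega
      simp [hi0]
    rw [hzero, hc0, hr0]
    simp
  · obtain ⟨q, s, hs1, hsk, hrqs⟩ : ∃ q s : ℕ, 1 ≤ s ∧ s ≤ k ∧ r = q * k + s := by
      refine ⟨(r - 1) / k, (r - 1) % k + 1, by omega, ?_, ?_⟩
      · have := Nat.mod_lt (r - 1) hk; omega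
      · have := Nat.div_add_mod' (r - 1) k; omega
    have hcr : (r + k - 1) / k = q + 1 := by
      have e : r + k - 1 = q * k + s + k - 1 := by omega
      rw [e]; exact aux_ceil_eq k q s hs1 hsk
    refine ⟨fun i => (if i = 0 then m else 0) + (if i = s then 1 else 0) +
      (if i = k then q else 0), ?_⟩
    have hsmem : s ∈ Finset.Icc 1 k := Finset.mem_Icc.mpr ⟨hs1, hsk⟩
    have hkmem : k ∈ Finset.Icc 1 k := Finset.mem_Icc.mpr ⟨hk, le_refl k⟩
    have hsum : ∑ i ∈ Finset.Icc 1 k, ((h * a : ℤ) + i * d) *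
        (((if i = 0 then m else 0) + (if i = s then 1 else 0) +
          (if i = k then q else 0) : ℕ) : ℤ)
        = ((h * a : ℤ) + s * d) + ((h * a : ℤ) + k * d) * q := by
      have step : ∀ i ∈ Finset.Icc 1 k, ((h * a : ℤ) + i * d) *
          (((if i = 0 then m else 0) + (if i = s then 1 else 0) +
            (if i = k then q else 0) : ℕ) : ℤ)
          = (if i = s then ((h * a : ℤ) + i * d) else 0) +
            (if i = k then ((h * a : ℤ) + i * d) * q else 0) := by
        intro i hi
        have hi0 : i ≠ 0 := by have := (Finset.mem_Icc.mp hi).1; omega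
        by_cases h1 : i = s
        · subst h1
          by_cases h2 : i = k
          · subst h2
            simp only [if_neg hi0, if_pos rfl]
            push_cast; ring
          · simp only [if_neg hi0, if_pos rfl, if_neg h2]
            push_cast; ring
        · by_cases h2 : i = k
          · subst h2
            simp only [if_neg hi0, if_pos rfl, if_neg h1]
            push_cast; ring
          · simp [hi0, h1, h2]
      rw [Finset.sum_congr rfl step, Finset.sum_add_distrib,
        Finset.sum_ite_eq' _ s, Finset.sum_ite_eq' _ k, if_pos hsmem, if_pos hkmem]
    show (a : ℤ) * m + ((h * a : ℤ) * (((r + k - 1) / k : ℕ) : ℤ) + d * r) =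
      a * (((if (0:ℕ) = 0 then m else 0) + (if (0:ℕ) = s then 1 else 0) +
        (if (0:ℕ) = k then q else 0) : ℕ) : ℤ) +
      ∑ i ∈ Finset.Icc 1 k, ((h * a : ℤ) + i * d) *
        (((if i = 0 then m else 0) + (if i = s then 1 else 0) +
          (if i = k then q else 0) : ℕ) : ℤ)
    have hx0 : ((if (0:ℕ) = 0 then m else 0) + (if (0:ℕ) = s then 1 else 0) +
        (if (0:ℕ) = k then q else 0) : ℕ) = m := by
      have h1 : (0:ℕ) ≠ s := by omega
      have h2 : (0:ℕ) ≠ k := by omega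
      simp [h1, h2]
    rw [hsum, hx0, hcr]
    have hrz : (r : ℤ) = (q : ℤ) * k + s := by exact_mod_cast hrqs
    push_cast
    rw [hrz]; ring

private lemma aux_uniq (h a : ℕ) (ha : 0 < a) (d : ℤ) (hcop : IsCoprime (a : ℤ) d)
    (m₁ r₁ m₂ r₂ c₁ c₂ : ℕ) (hr₁ : r₁ < a) (hr₂ : r₂ < a)
    (heq : (a : ℤ) * m₁ + ((h * a : ℤ) * c₁ + d * r₁)
         = (a : ℤ) * m₂ + ((h * a : ℤ) * c₂ + d * r₂)) (hc : r₁ = r₂ → c₁ = c₂) :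
    m₁ = m₂ ∧ r₁ = r₂ := by
  have hdvd : (a : ℤ) ∣ d * ((r₁ : ℤ) - r₂) := by
    refine ⟨(m₂ : ℤ) - m₁ + h * c₂ - h * c₁, ?_⟩
    linear_combination heq
  have hdvd2 : (a : ℤ) ∣ ((r₁ : ℤ) - r₂) := hcop.dvd_of_dvd_mul_left hdvd
  have habs : |(r₁ : ℤ) - r₂| < a := by
    rw [abs_lt]
    have h1 : (r₁ : ℤ) < a := by exact_mod_cast hr₁
    have h2 : (r₂ : ℤ) < a := by exact_mod_cast hr₂
    have h3 : (0:ℤ) ≤ r₁ := by positivity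
    have h4 : (0:ℤ) ≤ r₂ := by positivity
    constructor <;> linarith
  have hz : (r₁ : ℤ) - r₂ = 0 := Int.eq_zero_of_abs_lt_dvd hdvd2 habs
  have hr : r₁ = r₂ := by exact_mod_cast sub_eq_zero.mp hz
  have hcc := hc hr
  refine ⟨?_, hr⟩
  have hmm : (a : ℤ) * m₁ = (a : ℤ) * m₂ := by rw [hr, hcc] at heq; linarith
  have ha' : (a : ℤ) ≠ 0 := by positivity
  exact_mod_cast mul_left_cancel₀ ha' hmm

theorem stmt_9 (h a k : ℕ) (hh : 0 < h) (ha : 0 < a) (hk : 0 < k) (d : ℤ)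
    (hcop : IsCoprime (a : ℤ) d) (hpos : 0 < (a : ℤ) + k * d) :
    ({z : ℤ | ∃ x : ℕ → ℕ,
        z = a * x 0 + ∑ i ∈ Finset.Icc 1 k, ((h * a : ℤ) + i * d) * x i} =
      {z : ℤ | ∃ m r : ℕ, r < a ∧
        z = a * m + ((h * a : ℤ) * (((r + k - 1) / k : ℕ) : ℤ) + d * r)}) ∧
    ∀ z : ℤ, (∃ x : ℕ → ℕ,
        z = a * x 0 + ∑ i ∈ Finset.Icc 1 k, ((h * a : ℤ) + i * d) * x i) →
      ∃! p : ℕ × ℕ, p.2 < a ∧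
        z = a * p.1 + ((h * a : ℤ) * (((p.2 + k - 1) / k : ℕ) : ℤ) + d * p.2) := by
  constructor
  · ext z
    simp only [Set.mem_setOf_eq]
    constructor
    · rintro ⟨x, rfl⟩
      exact aux_fwd h a k hh ha hk d hpos x
    · rintro ⟨m, r, hr, rfl⟩
      obtain ⟨x, hx⟩ := aux_bwd h a k hh ha hk d m r hr
      exact ⟨x, hx⟩
  · rintro z ⟨x, rfl⟩
    obtain ⟨m, r, hr, hz⟩ := aux_fwd h a k hh ha hk d hpos x
    refine ⟨(m, r), ⟨hr, hz⟩, ?_⟩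
    rintro ⟨m', r'⟩ ⟨hr', hz'⟩
    have heq : (a : ℤ) * m' + ((h * a : ℤ) * (((r' + k - 1) / k : ℕ) : ℤ) + d * r')
        = (a : ℤ) * m + ((h * a : ℤ) * (((r + k - 1) / k : ℕ) : ℤ) + d * r) := by
      rw [← hz', ← hz]
    obtain ⟨hm, hrr⟩ := aux_uniq h a ha d hcop m' r' m r _ _ hr' hr heq
      (fun hrr => by rw [hrr])
    simp [hm, hrr]
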